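/- (Inter-party moments composition in FedOnce: guest mechanisms plus an adaptive host mechanism.) Let k ≥ 2. For each guest party j ∈ {1,…,k−1}, let μⱼ and νⱼ be probability measures on a measurable space Ωⱼ (the distributions of party j's released representation under two neighboring datasets) with μⱼ ≪ νⱼ, and fix λ > 0 and constants a₁,…,a_{k−1} ∈ [0,∞) with ∫ (dμⱼ/dνⱼ)^λ dμⱼ ≤ e^{aⱼ} for each j. For the host party, let κ and η be Markov kernels from ∏_{j=1}^{k−1} Ωⱼ to a measurable space Ω_k (the host's output distribution given the guests' outputs, under the two neighboring datasets) with κ(o) ≪ η(o) for all o, and a constant a_k ∈ [0,∞) with ∫ (d κ(o)/d η(o))^λ d κ(o) ≤ e^{a_k} for every o ∈ ∏ⱼ Ωⱼ. Let M = (⊗_{j<k} μⱼ) ⊗ₖ κ and N = (⊗_{j<k} νⱼ) ⊗ₖ η be the joint output distributions on (∏_{j<k} Ωⱼ) × Ω_k. Then M ≪ N and ∫ (dM/dN)^λ dM ≤ exp(∑_{j=1}^{k} aⱼ); equivalently, the overall λ-th moment satisfies α_M(λ) ≤ ∑_{j=1}^{k} aⱼ, the sum of the per-party moment bounds. -/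

import Mathlib

open MeasureTheory ProbabilityTheory
open scoped ENNReal NNReal

section Aux

open Function

variable {α : Type*} [MeasurableSpace α]

/-- Splitting an `rpow` with positive exponents, valid away from `∞`. -/
lemma FedOnce.rpow_add_of_ne_top (x : ℝ≥0∞) {b c : ℝ} (hb : 0 < b) (hc : 0 < c)
    (hx : x ≠ ∞) : x ^ (b + c) = x ^ b * x ^ c := by
  rcases eq_or_ne x 0 with rfl | hx0
  · rw [ENNReal.zero_rpow_of_pos (by linarith), ENNReal.zero_rpow_of_pos hb,
      ENNReal.zero_rpow_of_pos hc, zero_mul]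
  · exact ENNReal.rpow_add _ _ hx0 hx

/-- The `(1+λ)`-moment w.r.t. the reference measure equals the `λ`-moment w.r.t. the
first measure. -/
lemma FedOnce.moment_eq {P Q : Measure α} [IsFiniteMeasure P] [SigmaFinite Q]
    (h : P ≪ Q) {lam : ℝ} (hlam : 0 < lam) :
    ∫⁻ x, P.rnDeriv Q x ^ (1 + lam) ∂Q = ∫⁻ x, P.rnDeriv Q x ^ lam ∂P := by
  have hm : Measurable fun x => P.rnDeriv Q x ^ lam :=
    ENNReal.continuous_rpow_const.measurable.comp (Measure.measurable_rnDeriv P Q)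
  have h0 : ∫⁻ x, P.rnDeriv Q x ^ lam ∂(Q.withDensity (P.rnDeriv Q))
      = ∫⁻ x, (P.rnDeriv Q * fun x => P.rnDeriv Q x ^ lam) x ∂Q :=
    lintegral_withDensity_eq_lintegral_mul _ (Measure.measurable_rnDeriv P Q) hm
  rw [Measure.withDensity_rnDeriv_eq P Q h] at h0
  rw [h0]
  refine lintegral_congr_ae ?_
  filter_upwards [Measure.rnDeriv_lt_top P Q] with x hx
  rw [FedOnce.rpow_add_of_ne_top _ one_pos hlam hx.ne, ENNReal.rpow_one, Pi.mul_apply]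

/-- `⨆ n, (min a n) ^ λ = a ^ λ` for `λ > 0`. -/
lemma FedOnce.iSup_min_rpow (a : ℝ≥0∞) {lam : ℝ} (hlam : 0 < lam) :
    ⨆ n : ℕ, (min a (n : ℝ≥0∞)) ^ lam = a ^ lam := by
  have h1 : Monotone fun n : ℕ => min a (n : ℝ≥0∞) := fun m n h =>
    min_le_min le_rfl (by exact_mod_cast h)
  have h2 : (⨆ n : ℕ, min a (n : ℝ≥0∞)) = a := by
    refine le_antisymm (iSup_le fun n => min_le_left _ _) ?_
    rcases eq_or_ne a ⊤ with rfl | ha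
    · calc (⊤ : ℝ≥0∞) = ⨆ n : ℕ, (n : ℝ≥0∞) := ENNReal.iSup_natCast.symm
        _ ≤ ⨆ n : ℕ, min ⊤ (n : ℝ≥0∞) := iSup_mono fun n => (min_eq_right le_top).ge
    · obtain ⟨n, hn⟩ := ENNReal.exists_nat_gt ha
      exact le_iSup_of_le n (min_eq_left hn.le).ge
  have h3 : Filter.Tendsto (fun n : ℕ => min a (n : ℝ≥0∞)) Filter.atTop (nhds a) := by
    have := tendsto_atTop_iSup h1
    rwa [h2] at this
  have h4 : Filter.Tendsto (fun n : ℕ => (min a (n : ℝ≥0∞)) ^ lam) Filter.atTop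
      (nhds (a ^ lam)) := (ENNReal.continuous_rpow_const.tendsto a).comp h3
  have h5 : Filter.Tendsto (fun n : ℕ => (min a (n : ℝ≥0∞)) ^ lam) Filter.atTop
      (nhds (⨆ n : ℕ, (min a (n : ℝ≥0∞)) ^ lam)) :=
    tendsto_atTop_iSup (fun m n h => ENNReal.rpow_le_rpow (h1 h) hlam.le)
  exact tendsto_nhds_unique h5 h4

/-- Young-type pointwise inequality in `ℝ≥0∞`. -/
lemma FedOnce.young_pointwise {lam : ℝ} (hlam : 0 < lam) (u s : ℝ≥0∞) :
    (1 + ENNReal.ofReal lam) * (u * s ^ lam) ≤ u ^ (1 + lam)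
      + ENNReal.ofReal lam * s ^ (1 + lam) := by
  have hp : (1 : ℝ) < 1 + lam := by linarith
  have hq : (0 : ℝ) < (1 + lam) / lam := by positivity
  have hpq : (1 + lam).HolderConjugate ((1 + lam) / lam) := by
    rw [Real.holderConjugate_iff]; constructor
    · exact hp
    · field_simp
  have h := ENNReal.young_inequality u (s ^ lam) hpq
  have hBq : (s ^ lam) ^ ((1 + lam) / lam) = s ^ (1 + lam) := by
    rw [← ENNReal.rpow_mul]
    congr 1
    field_simp
  rw [hBq] at h
  have hone : (1 : ℝ≥0∞) + ENNReal.ofReal lam = ENNReal.ofReal (1 + lam) := by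
    rw [ENNReal.ofReal_add zero_le_one hlam.le, ENNReal.ofReal_one]
  have hp0 : ENNReal.ofReal (1 + lam) ≠ 0 := by
    simp [ENNReal.ofReal_eq_zero]; linarith
  have hpt : ENNReal.ofReal (1 + lam) ≠ ∞ := ENNReal.ofReal_ne_top
  calc (1 + ENNReal.ofReal lam) * (u * s ^ lam)
      = ENNReal.ofReal (1 + lam) * (u * s ^ lam) := by rw [hone]
    _ ≤ ENNReal.ofReal (1 + lam) *
        (u ^ (1 + lam) / ENNReal.ofReal (1 + lam)
          + s ^ (1 + lam) / ENNReal.ofReal ((1 + lam) / lam)) := mul_le_mul_right h _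
    _ = ENNReal.ofReal (1 + lam) * (u ^ (1 + lam) / ENNReal.ofReal (1 + lam))
        + ENNReal.ofReal (1 + lam) * (s ^ (1 + lam) / ENNReal.ofReal ((1 + lam) / lam)) := by
        rw [mul_add]
    _ = u ^ (1 + lam) + ENNReal.ofReal lam * s ^ (1 + lam) := by
        rw [ENNReal.mul_div_cancel hp0 hpt]
        congr 1
        rw [div_eq_mul_inv, ← mul_assoc, mul_comm (ENNReal.ofReal (1 + lam)) (s ^ (1 + lam)),
          mul_assoc, ← div_eq_mul_inv, mul_comm]
        congr 1
        rw [← ENNReal.ofReal_div_of_pos hq]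
        congr 1
        field_simp

end Aux

section PiAux

open Function

variable {ι : Type*} [Fintype ι] {π : ι → Type*} [∀ i, MeasurableSpace (π i)]

/-- Lintegral of a product of coordinate functions over a product measure. -/
lemma FedOnce.lintegral_pi_prod (μ : ∀ i, Measure (π i)) [∀ i, SigmaFinite (μ i)]
    [Nonempty (∀ i, π i)] (f : ∀ i, π i → ℝ≥0∞) (hf : ∀ i, Measurable (f i)) :
    ∫⁻ x, ∏ i, f i (x i) ∂Measure.pi μ = ∏ i, ∫⁻ y, f i y ∂μ i := by
  classical
  obtain ⟨x₀⟩ := ‹Nonempty (∀ i, π i)›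
  have key : ∀ s : Finset ι, ∀ x : ∀ i, π i,
      (∫⋯∫⁻_s, (fun y => ∏ i ∈ s, f i (y i)) ∂μ) x = ∏ i ∈ s, ∫⁻ y, f i y ∂μ i := by
    intro s
    induction s using Finset.induction_on with
    | empty => intro x; simp
    | @insert i s hi ih =>
      intro x
      have hFmeas : Measurable fun y : ∀ i, π i => ∏ j ∈ insert i s, f j (y j) :=
        Finset.measurable_prod _ fun j _ => (hf j).comp (measurable_pi_apply j)
      rw [lmarginal_insert _ hFmeas hi x]
      have hsplit : ∀ z : ∀ i, π i,
          (∫⋯∫⁻_s, (fun y => ∏ j ∈ insert i s, f j (y j)) ∂μ) z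
            = f i (z i) * (∫⋯∫⁻_s, (fun y => ∏ j ∈ s, f j (y j)) ∂μ) z := by
        intro z
        simp only [lmarginal]
        have e1 : ∀ y : ∀ j : s, π j, ∏ j ∈ insert i s, f j (updateFinset z s y j)
            = f i (z i) * ∏ j ∈ s, f j (updateFinset z s y j) := by
          intro y
          rw [Finset.prod_insert hi]
          congr 1
          simp [updateFinset, hi]
        have hms : Measurable fun y : ∀ j : s, π j =>
            ∏ j ∈ s, f j (updateFinset z s y j) :=
          (Finset.measurable_prod s fun j _ =>
            (hf j).comp (measurable_pi_apply j)).comp measurable_updateFinset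
        calc ∫⁻ y, ∏ j ∈ insert i s, f j (updateFinset z s y j)
              ∂(Measure.pi fun j : s => μ j)
            = ∫⁻ y, f i (z i) * ∏ j ∈ s, f j (updateFinset z s y j)
              ∂(Measure.pi fun j : s => μ j) := lintegral_congr e1
          _ = f i (z i) * ∫⁻ y, ∏ j ∈ s, f j (updateFinset z s y j)
              ∂(Measure.pi fun j : s => μ j) := lintegral_const_mul _ hms
      simp_rw [hsplit, ih, Function.update_self]
      rw [lintegral_mul_const _ (hf i), Finset.prod_insert hi]
  rw [lintegral_eq_lmarginal_univ x₀]
  exact key Finset.univ x₀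

/-- The product of absolutely continuous probability measures is the reference product
measure with density the product of the Radon-Nikodym derivatives. -/
lemma FedOnce.pi_eq_withDensity (μ ν : ∀ i, Measure (π i)) [∀ i, IsProbabilityMeasure (μ i)]
    [∀ i, IsProbabilityMeasure (ν i)] [Nonempty (∀ i, π i)] (hac : ∀ i, μ i ≪ ν i) :
    Measure.pi μ = (Measure.pi ν).withDensity
      (fun x => ∏ i, (μ i).rnDeriv (ν i) (x i)) := by
  refine Measure.pi_eq fun s hs => ?_
  rw [withDensity_apply _ (MeasurableSet.univ_pi hs),
    ← lintegral_indicator (MeasurableSet.univ_pi hs)]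
  have hind : ∀ x : ∀ i, π i,
      (Set.univ.pi s).indicator (fun x => ∏ i, (μ i).rnDeriv (ν i) (x i)) x
        = ∏ i, (s i).indicator (fun y => (μ i).rnDeriv (ν i) y) (x i) := by
    intro x
    by_cases hx : x ∈ Set.univ.pi s
    · rw [Set.indicator_of_mem hx]
      exact Finset.prod_congr rfl fun i _ =>
        (Set.indicator_of_mem (hx i (Set.mem_univ i)) _).symm
    · rw [Set.indicator_of_notMem hx]
      rw [Set.mem_univ_pi] at hx
      push_neg at hx
      obtain ⟨i, hi⟩ := hx
      exact (Finset.prod_eq_zero (Finset.mem_univ i) (Set.indicator_of_notMem hi _)).symm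
  simp_rw [hind]
  rw [FedOnce.lintegral_pi_prod ν _
    (fun i => (Measure.measurable_rnDeriv _ _).indicator (hs i))]
  refine Finset.prod_congr rfl fun i _ => ?_
  rw [lintegral_indicator (hs i) _, Measure.setLIntegral_rnDeriv (hac i)]

/-- Finite products and `rpow` commute in `ℝ≥0∞` for nonnegative exponents. -/
lemma FedOnce.prod_rpow {ι' : Type*} (s : Finset ι') (g : ι' → ℝ≥0∞) {r : ℝ} (hr : 0 ≤ r) :
    (∏ i ∈ s, g i) ^ r = ∏ i ∈ s, g i ^ r := by
  classical
  induction s using Finset.induction_on with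
  | empty => simp [ENNReal.one_rpow]
  | @insert i s hi ih =>
    rw [Finset.prod_insert hi, Finset.prod_insert hi, ENNReal.mul_rpow_of_nonneg _ _ hr, ih]

end PiAux

section Core

open Function

/-- Core adaptive composition bound for the `λ`-moment of the Radon-Nikodym derivative of
composition-products. -/
lemma FedOnce.compProd_moment {X Y : Type*} [MeasurableSpace X] [MeasurableSpace Y]
    (P Q : Measure X) [IsProbabilityMeasure P] [IsProbabilityMeasure Q] (hPQ : P ≪ Q)
    (κ η : Kernel X Y) [IsMarkovKernel κ] [IsMarkovKernel η] (hacκ : ∀ x, κ x ≪ η x)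
    {lam : ℝ} (hlam : 0 < lam) (C : ℝ≥0∞)
    (hC : ∀ x, ∫⁻ y, ((κ x).rnDeriv (η x) y) ^ lam ∂(κ x) ≤ C) :
    ∫⁻ z, ((P ⊗ₘ κ).rnDeriv (Q ⊗ₘ η) z) ^ lam ∂(P ⊗ₘ κ)
      ≤ C * ∫⁻ x, (P.rnDeriv Q x) ^ lam ∂P := by
  set f : X × Y → ℝ≥0∞ := (P ⊗ₘ κ).rnDeriv (Q ⊗ₘ η) with hf_def
  have hf : Measurable f := Measure.measurable_rnDeriv _ _
  have hMN : P ⊗ₘ κ ≪ Q ⊗ₘ η :=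
    Measure.AbsolutelyContinuous.compProd hPQ (Filter.Eventually.of_forall hacκ)
  set c : ℝ≥0∞ := ENNReal.ofReal lam with hc_def
  have hc_ne : c ≠ ∞ := ENNReal.ofReal_ne_top
  set G : ℝ≥0∞ := ∫⁻ x, (P.rnDeriv Q x) ^ lam ∂P with hG_def
  have hG' : ∫⁻ x, P.rnDeriv Q x ^ (1 + lam) ∂Q = G := FedOnce.moment_eq hPQ hlam
  have hQη : ∀ x, ∫⁻ y, ((κ x).rnDeriv (η x) y) ^ (1 + lam) ∂η x ≤ C := fun x =>
    (FedOnce.moment_eq (hacκ x) hlam).trans_le (hC x)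
  -- truncations
  set t : ℕ → X × Y → ℝ≥0∞ := fun n z => min (f z) (n : ℝ≥0∞) with ht_def
  have ht_meas : ∀ n, Measurable fun z => t n z ^ lam := fun n =>
    ENNReal.continuous_rpow_const.measurable.comp (hf.min measurable_const)
  have ht_measp : ∀ n, Measurable fun z => t n z ^ (1 + lam) := fun n =>
    ENNReal.continuous_rpow_const.measurable.comp (hf.min measurable_const)
  have ht_ne_top : ∀ n z, t n z ≠ ∞ := fun n z =>
    ((min_le_right _ _).trans_lt (ENNReal.natCast_lt_top n)).ne
  set E : ℕ → ℝ≥0∞ := fun n => ∫⁻ z, t n z ^ lam ∂(P ⊗ₘ κ) with hE_def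
  -- Step A : E n is finite
  have hE_ne_top : ∀ n, E n ≠ ∞ := by
    intro n
    have : E n ≤ (n : ℝ≥0∞) ^ lam := by
      calc E n ≤ ∫⁻ _, (n : ℝ≥0∞) ^ lam ∂(P ⊗ₘ κ) :=
            lintegral_mono fun z => ENNReal.rpow_le_rpow (min_le_right _ _) hlam.le
        _ = (n : ℝ≥0∞) ^ lam := by simp
    exact (this.trans_lt
      (ENNReal.rpow_ne_top_of_nonneg hlam.le (ENNReal.natCast_ne_top n)).lt_top).ne
  -- Step B : E n ≤ C * G
  have hE_le : ∀ n, E n ≤ C * G := by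
    intro n
    have hinner_meas : Measurable fun x => ∫⁻ y, t n (x, y) ^ lam ∂κ x :=
      (ht_meas n).lintegral_kernel_prod_right'
    have hinnerp_meas : Measurable fun x => ∫⁻ y, t n (x, y) ^ (1 + lam) ∂η x :=
      (ht_measp n).lintegral_kernel_prod_right'
    -- rewrite E n via the density of P w.r.t. Q
    have hEalt : E n = ∫⁻ x, P.rnDeriv Q x * (∫⁻ y, t n (x, y) ^ lam ∂κ x) ∂Q := by
      have h0 : ∫⁻ x, (∫⁻ y, t n (x, y) ^ lam ∂κ x) ∂(Q.withDensity (P.rnDeriv Q))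
          = ∫⁻ x, (P.rnDeriv Q * fun x => ∫⁻ y, t n (x, y) ^ lam ∂κ x) x ∂Q :=
        lintegral_withDensity_eq_lintegral_mul _ (Measure.measurable_rnDeriv P Q)
          hinner_meas
      rw [Measure.withDensity_rnDeriv_eq P Q hPQ] at h0
      rw [hE_def]
      simp only
      rw [Measure.lintegral_compProd (ht_meas n), h0]
      simp only [Pi.mul_apply]
    -- pointwise (in x) estimate
    have hx : ∀ x, (1 + c) * (P.rnDeriv Q x * ∫⁻ y, t n (x, y) ^ lam ∂κ x)
        ≤ (P.rnDeriv Q x) ^ (1 + lam) * C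
          + c * ∫⁻ y, t n (x, y) ^ (1 + lam) ∂η x := by
      intro x
      set u : ℝ≥0∞ := P.rnDeriv Q x with hu_def
      have hw_meas : Measurable ((κ x).rnDeriv (η x)) := Measure.measurable_rnDeriv _ _
      have htx : Measurable fun y => t n (x, y) ^ lam :=
        (ht_meas n).comp measurable_prodMk_left
      have htxp : Measurable fun y => t n (x, y) ^ (1 + lam) :=
        (ht_measp n).comp measurable_prodMk_left
      have hwt : Measurable fun y => (κ x).rnDeriv (η x) y * t n (x, y) ^ lam :=
        hw_meas.mul htx
      have huw : Measurable fun y => (u * (κ x).rnDeriv (η x) y) ^ (1 + lam) :=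
        ENNReal.continuous_rpow_const.measurable.comp (hw_meas.const_mul u)
      have hwp : Measurable fun y => ((κ x).rnDeriv (η x) y) ^ (1 + lam) :=
        ENNReal.continuous_rpow_const.measurable.comp hw_meas
      have hsplit : ∫⁻ y, t n (x, y) ^ lam ∂κ x
          = ∫⁻ y, (κ x).rnDeriv (η x) y * t n (x, y) ^ lam ∂η x := by
        have h0 : ∫⁻ y, t n (x, y) ^ lam ∂((η x).withDensity ((κ x).rnDeriv (η x)))
            = ∫⁻ y, ((κ x).rnDeriv (η x) * fun y => t n (x, y) ^ lam) y ∂η x :=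
          lintegral_withDensity_eq_lintegral_mul _ hw_meas htx
        rw [Measure.withDensity_rnDeriv_eq _ _ (hacκ x)] at h0
        rw [h0]
        simp only [Pi.mul_apply]
      rw [hsplit, ← mul_assoc, ← lintegral_const_mul ((1 + c) * u) hwt]
      have hpt : ∀ y, (1 + c) * u * ((κ x).rnDeriv (η x) y * t n (x, y) ^ lam)
          ≤ (u * (κ x).rnDeriv (η x) y) ^ (1 + lam) + c * t n (x, y) ^ (1 + lam) := by
        intro y
        have := FedOnce.young_pointwise hlam (u * (κ x).rnDeriv (η x) y) (t n (x, y))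
        calc (1 + c) * u * ((κ x).rnDeriv (η x) y * t n (x, y) ^ lam)
            = (1 + c) * (u * (κ x).rnDeriv (η x) y * t n (x, y) ^ lam) := by ring
          _ ≤ _ := this
      calc ∫⁻ y, (1 + c) * u * ((κ x).rnDeriv (η x) y * t n (x, y) ^ lam) ∂η x
          ≤ ∫⁻ y, ((u * (κ x).rnDeriv (η x) y) ^ (1 + lam)
              + c * t n (x, y) ^ (1 + lam)) ∂η x := lintegral_mono hpt
        _ = ∫⁻ y, (u * (κ x).rnDeriv (η x) y) ^ (1 + lam) ∂η x
              + c * ∫⁻ y, t n (x, y) ^ (1 + lam) ∂η x := by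
            rw [lintegral_add_left huw, lintegral_const_mul c htxp]
        _ ≤ u ^ (1 + lam) * C + c * ∫⁻ y, t n (x, y) ^ (1 + lam) ∂η x := by
            refine add_le_add ?_ le_rfl
            have heq : ∫⁻ y, (u * (κ x).rnDeriv (η x) y) ^ (1 + lam) ∂η x
                = u ^ (1 + lam) * ∫⁻ y, ((κ x).rnDeriv (η x) y) ^ (1 + lam) ∂η x := by
              simp_rw [ENNReal.mul_rpow_of_nonneg _ _ (by linarith : (0:ℝ) ≤ 1 + lam)]
              rw [lintegral_const_mul (u ^ (1 + lam)) hwp]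
            rw [heq]
            exact mul_le_mul_right (hQη x) _
    -- integrate the pointwise estimate over Q
    have key : (1 + c) * E n ≤ C * G + c * ∫⁻ z, t n z ^ (1 + lam) ∂(Q ⊗ₘ η) := by
      calc (1 + c) * E n
          = ∫⁻ x, (1 + c) * (P.rnDeriv Q x * ∫⁻ y, t n (x, y) ^ lam ∂κ x) ∂Q := by
            rw [hEalt, lintegral_const_mul (f := fun x => P.rnDeriv Q x * ∫⁻ y, t n (x, y) ^ lam ∂κ x) _
              ((Measure.measurable_rnDeriv P Q).mul hinner_meas)]
        _ ≤ ∫⁻ x, ((P.rnDeriv Q x) ^ (1 + lam) * C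
              + c * ∫⁻ y, t n (x, y) ^ (1 + lam) ∂η x) ∂Q := lintegral_mono hx
        _ = (∫⁻ x, (P.rnDeriv Q x) ^ (1 + lam) ∂Q) * C
              + c * ∫⁻ x, (∫⁻ y, t n (x, y) ^ (1 + lam) ∂η x) ∂Q := by
            have hup : Measurable fun x => (P.rnDeriv Q x) ^ (1 + lam) :=
              ENNReal.continuous_rpow_const.measurable.comp (Measure.measurable_rnDeriv P Q)
            have hupC : Measurable fun x => (P.rnDeriv Q x) ^ (1 + lam) * C :=
              hup.mul_const C
            rw [lintegral_add_left hupC, lintegral_mul_const C hup,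
              lintegral_const_mul c hinnerp_meas]
        _ = C * G + c * ∫⁻ z, t n z ^ (1 + lam) ∂(Q ⊗ₘ η) := by
            rw [hG', mul_comm, Measure.lintegral_compProd (ht_measp n)]
    -- the last integral is at most E n
    have hlast : ∫⁻ z, t n z ^ (1 + lam) ∂(Q ⊗ₘ η) ≤ E n := by
      have hptz : ∀ z, t n z ^ (1 + lam) ≤ t n z ^ lam * f z := by
        intro z
        rw [add_comm, FedOnce.rpow_add_of_ne_top _ hlam one_pos (ht_ne_top n z),
          ENNReal.rpow_one]
        exact mul_le_mul_right (min_le_left _ _) _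
      calc ∫⁻ z, t n z ^ (1 + lam) ∂(Q ⊗ₘ η)
          ≤ ∫⁻ z, t n z ^ lam * f z ∂(Q ⊗ₘ η) := lintegral_mono hptz
        _ = E n := by
            have h0 : ∫⁻ z, t n z ^ lam ∂((Q ⊗ₘ η).withDensity f)
                = ∫⁻ z, (f * fun z => t n z ^ lam) z ∂(Q ⊗ₘ η) :=
              lintegral_withDensity_eq_lintegral_mul _ hf (ht_meas n)
            have hwd : (Q ⊗ₘ η).withDensity f = P ⊗ₘ κ := by
              rw [hf_def]; exact Measure.withDensity_rnDeriv_eq _ _ hMN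
            rw [hwd] at h0
            rw [hE_def]
            simp only
            rw [h0]
            exact lintegral_congr fun z => mul_comm _ _
    have key2 : E n + c * E n ≤ C * G + c * E n := by
      have h1 : (1 + c) * E n = E n + c * E n := by rw [add_mul, one_mul]
      calc E n + c * E n = (1 + c) * E n := h1.symm
        _ ≤ C * G + c * ∫⁻ z, t n z ^ (1 + lam) ∂(Q ⊗ₘ η) := key
        _ ≤ C * G + c * E n := add_le_add le_rfl (mul_le_mul_right hlast c)
    exact (ENNReal.add_le_add_iff_right (ENNReal.mul_ne_top hc_ne (hE_ne_top n))).mp key2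
  -- Step C : monotone convergence
  have hmono : Monotone fun n : ℕ => fun z => t n z ^ lam := fun m n h z =>
    ENNReal.rpow_le_rpow (min_le_min le_rfl (by exact_mod_cast h)) hlam.le
  have hsup : ∫⁻ z, f z ^ lam ∂(P ⊗ₘ κ) = ⨆ n, E n := by
    rw [hE_def]
    simp only
    rw [← lintegral_iSup ht_meas hmono]
    exact lintegral_congr fun z => (FedOnce.iSup_min_rpow (f z) hlam).symm
  rw [hsup]
  exact iSup_le hE_le

end Core

/-- Inter-party moments composition in FedOnce: `k-1` guest mechanisms run independently
on the (shared) dataset and a host mechanism runs adaptively on the guests' outputs.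
If each guest pair `(μ j, ν j)` has λ-th moment at most `e^{a j}` and the host kernels
`(κ o, η o)` have λ-th moment at most `e^{a_k}` uniformly in `o`, then the joint output
distributions `M = (⊗ μ j) ⊗ₘ κ` and `N = (⊗ ν j) ⊗ₘ η` satisfy `M ≪ N` and the overall
λ-th moment of `(M, N)` is at most `exp((∑ j, a j) + a_k)`. -/
theorem fedonce_interparty_moments
    (k : ℕ) (hk : 2 ≤ k)
    (Ω : Fin (k - 1) → Type*) [∀ j, MeasurableSpace (Ω j)]
    (Ωk : Type*) [MeasurableSpace Ωk]
    (μ ν : ∀ j, Measure (Ω j))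
    [∀ j, IsProbabilityMeasure (μ j)] [∀ j, IsProbabilityMeasure (ν j)]
    (hac : ∀ j, μ j ≪ ν j)
    (lam : ℝ) (hlam : 0 < lam)
    (a : Fin (k - 1) → ℝ) (ha : ∀ j, 0 ≤ a j)
    (hguest : ∀ j, ∫⁻ x, ((μ j).rnDeriv (ν j) x) ^ lam ∂(μ j)
      ≤ ENNReal.ofReal (Real.exp (a j)))
    (κ η : Kernel (∀ j, Ω j) Ωk) [IsMarkovKernel κ] [IsMarkovKernel η]
    (hacκ : ∀ o : ∀ j, Ω j, κ o ≪ η o)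
    (ak : ℝ) (hak : 0 ≤ ak)
    (hhost : ∀ o : ∀ j, Ω j,
      ∫⁻ x, ((κ o).rnDeriv (η o) x) ^ lam ∂(κ o) ≤ ENNReal.ofReal (Real.exp ak)) :
    (Measure.pi μ ⊗ₘ κ) ≪ (Measure.pi ν ⊗ₘ η) ∧
      ∫⁻ x, ((Measure.pi μ ⊗ₘ κ).rnDeriv (Measure.pi ν ⊗ₘ η) x) ^ lam
          ∂(Measure.pi μ ⊗ₘ κ)
        ≤ ENNReal.ofReal (Real.exp ((∑ j, a j) + ak)) := by
  haveI : ∀ j, Nonempty (Ω j) := fun j => by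
    have h : (Set.univ : Set (Ω j)).Nonempty :=
      nonempty_of_measure_ne_zero (μ := μ j) (by simp)
    exact ⟨h.some⟩
  haveI : Nonempty (∀ j, Ω j) := ⟨fun j => Classical.arbitrary _⟩
  -- the product density
  set g : (∀ j, Ω j) → ℝ≥0∞ := fun x => ∏ j, (μ j).rnDeriv (ν j) (x j) with hg_def
  have hg_meas : Measurable g :=
    Finset.measurable_prod _ fun j _ =>
      (Measure.measurable_rnDeriv _ _).comp (measurable_pi_apply j)
  have hpi := FedOnce.pi_eq_withDensity μ ν hac
  have hPQ : Measure.pi μ ≪ Measure.pi ν := by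
    rw [hpi]; exact withDensity_absolutelyContinuous _ _
  have hMN : (Measure.pi μ ⊗ₘ κ) ≪ (Measure.pi ν ⊗ₘ η) :=
    Measure.AbsolutelyContinuous.compProd hPQ (Filter.Eventually.of_forall hacκ)
  refine ⟨hMN, ?_⟩
  -- guest moment bound
  have hguest_total : ∫⁻ x, ((Measure.pi μ).rnDeriv (Measure.pi ν) x) ^ lam ∂Measure.pi μ
      ≤ ENNReal.ofReal (Real.exp (∑ j, a j)) := by
    have h1 : (Measure.pi μ).rnDeriv (Measure.pi ν) =ᵐ[Measure.pi ν] g := by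
      rw [hpi]; exact Measure.rnDeriv_withDensity _ hg_meas
    have h2 : (Measure.pi μ).rnDeriv (Measure.pi ν) =ᵐ[Measure.pi μ] g := hPQ.ae_eq h1
    have h3 : ∫⁻ x, ((Measure.pi μ).rnDeriv (Measure.pi ν) x) ^ lam ∂Measure.pi μ
        = ∫⁻ x, g x ^ lam ∂Measure.pi μ := by
      refine lintegral_congr_ae ?_
      filter_upwards [h2] with x hx
      rw [hx]
    rw [h3]
    have h4 : ∫⁻ x, g x ^ lam ∂Measure.pi μ
        = ∏ j, ∫⁻ y, ((μ j).rnDeriv (ν j) y) ^ lam ∂μ j := by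
      have : ∀ x, g x ^ lam = ∏ j, ((μ j).rnDeriv (ν j) (x j)) ^ lam := fun x =>
        FedOnce.prod_rpow _ _ hlam.le
      simp_rw [this]
      exact FedOnce.lintegral_pi_prod μ _ fun j =>
        ENNReal.continuous_rpow_const.measurable.comp (Measure.measurable_rnDeriv _ _)
    rw [h4, Real.exp_sum, ENNReal.ofReal_prod_of_nonneg (fun i _ => (Real.exp_pos _).le)]
    exact Finset.prod_le_prod' fun j _ => hguest j
  -- combine with the host bound via the core composition lemma
  calc ∫⁻ x, ((Measure.pi μ ⊗ₘ κ).rnDeriv (Measure.pi ν ⊗ₘ η) x) ^ lam ∂(Measure.pi μ ⊗ₘ κ)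
      ≤ ENNReal.ofReal (Real.exp ak)
        * ∫⁻ x, ((Measure.pi μ).rnDeriv (Measure.pi ν) x) ^ lam ∂Measure.pi μ :=
        FedOnce.compProd_moment _ _ hPQ κ η hacκ hlam _ hhost
    _ ≤ ENNReal.ofReal (Real.exp ak) * ENNReal.ofReal (Real.exp (∑ j, a j)) :=
        mul_le_mul_right hguest_total _
    _ = ENNReal.ofReal (Real.exp ((∑ j, a j) + ak)) := by
        rw [Real.exp_add, ENNReal.ofReal_mul (Real.exp_pos _).le, mul_comm]
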